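/- Let H be a Hopf algebra and R ∈ H ⊗ H a quasitriangular structure. Then R satisfies R_{12} R_{31}^{-1} R_{23} = R_{23} R_{31}^{-1} R_{12} if and only if the element F = R_{21} R ∈ H ⊗ H satisfies F_{12} F_{23} = F_{23} F_{12} in H ⊗ H ⊗ H. -/

import Mathlib

open TensorProduct

noncomputable section

variable (k H : Type*) [Field k] [Ring H] [HopfAlgebra k H]

/-- `a ⊗ b ↦ a ⊗ b ⊗ 1`. -/
def leg12 : H ⊗[k] H →ₐ[k] H ⊗[k] (H ⊗[k] H) :=
  Algebra.TensorProduct.map (AlgHom.id k H) Algebra.TensorProduct.includeLeft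

/-- `a ⊗ b ↦ 1 ⊗ a ⊗ b`. -/
def leg23 : H ⊗[k] H →ₐ[k] H ⊗[k] (H ⊗[k] H) :=
  Algebra.TensorProduct.includeRight

/-- `a ⊗ b ↦ a ⊗ 1 ⊗ b`. -/
def leg13 : H ⊗[k] H →ₐ[k] H ⊗[k] (H ⊗[k] H) :=
  Algebra.TensorProduct.map (AlgHom.id k H) Algebra.TensorProduct.includeRight

/-- `a ⊗ b ↦ b ⊗ 1 ⊗ a`. -/
def leg31 : H ⊗[k] H →ₐ[k] H ⊗[k] (H ⊗[k] H) :=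
  (leg13 k H).comp (Algebra.TensorProduct.comm k H H).toAlgHom

def t23 : (H ⊗[k] (H ⊗[k] H)) ≃ₐ[k] (H ⊗[k] (H ⊗[k] H)) :=
  Algebra.TensorProduct.congr AlgEquiv.refl (Algebra.TensorProduct.comm k H H)
def t12 : (H ⊗[k] (H ⊗[k] H)) ≃ₐ[k] (H ⊗[k] (H ⊗[k] H)) :=
  (Algebra.TensorProduct.assoc k k k H H H).symm.trans
    ((Algebra.TensorProduct.congr (Algebra.TensorProduct.comm k H H) AlgEquiv.refl).trans
      (Algebra.TensorProduct.assoc k k k H H H))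

lemma t23_leg12 (y : H ⊗[k] H) : t23 k H (leg12 k H y) = leg13 k H y := by
  induction y using TensorProduct.induction_on with
  | zero => simp
  | tmul a b => simp [t23, leg12, leg13]
  | add x y hx hy => simp only [map_add, hx, hy]

lemma t23_leg13 (y : H ⊗[k] H) : t23 k H (leg13 k H y) = leg12 k H y := by
  induction y using TensorProduct.induction_on with
  | zero => simp
  | tmul a b => simp [t23, leg12, leg13]
  | add x y hx hy => simp only [map_add, hx, hy]

lemma t23_leg23 (y : H ⊗[k] H) :
    t23 k H (leg23 k H y) = leg23 k H (Algebra.TensorProduct.comm k H H y) := by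
  induction y using TensorProduct.induction_on with
  | zero => simp
  | tmul a b => simp [t23, leg23]
  | add x y hx hy => simp only [map_add, hx, hy]

lemma t12_leg12 (y : H ⊗[k] H) :
    t12 k H (leg12 k H y) = leg12 k H (Algebra.TensorProduct.comm k H H y) := by
  induction y using TensorProduct.induction_on with
  | zero => simp
  | tmul a b => simp [t12, leg12]
  | add x y hx hy => simp only [map_add, hx, hy]

lemma t12_leg13 (y : H ⊗[k] H) : t12 k H (leg13 k H y) = leg23 k H y := by
  induction y using TensorProduct.induction_on with
  | zero => simp
  | tmul a b => simp [t12, leg13, leg23]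
  | add x y hx hy => simp only [map_add, hx, hy]

lemma t12_leg23 (y : H ⊗[k] H) : t12 k H (leg23 k H y) = leg13 k H y := by
  induction y using TensorProduct.induction_on with
  | zero => simp
  | tmul a b => simp [t12, leg13, leg23]
  | add x y hx hy => simp only [map_add, hx, hy]

lemma leg12_eq (y : H ⊗[k] H) :
    leg12 k H y = (Algebra.TensorProduct.assoc k k k H H H) (y ⊗ₜ 1) := by
  induction y using TensorProduct.induction_on with
  | zero => simp
  | tmul a b => simp [leg12]
  | add x y hx hy => simp only [map_add, add_tmul, hx, hy]

lemma t12_assoc (z : (H ⊗[k] H) ⊗[k] H) :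
    t12 k H ((Algebra.TensorProduct.assoc k k k H H H) z) =
      (Algebra.TensorProduct.assoc k k k H H H)
        ((Algebra.TensorProduct.congr (Algebra.TensorProduct.comm k H H) AlgEquiv.refl) z) := by
  simp [t12]

lemma conj_lemma (R Rinv : H ⊗[k] H)
    (hΔop : ∀ h : H,
      (Algebra.TensorProduct.comm k H H) (Bialgebra.comulAlgHom k H h) =
        R * Bialgebra.comulAlgHom k H h * Rinv)
    (x : H ⊗[k] H) :
    t12 k H ((Algebra.TensorProduct.assoc k k k H H H)
        ((Algebra.TensorProduct.map (Bialgebra.comulAlgHom k H) (AlgHom.id k H)) x)) =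
      leg12 k H R * (Algebra.TensorProduct.assoc k k k H H H)
        ((Algebra.TensorProduct.map (Bialgebra.comulAlgHom k H) (AlgHom.id k H)) x) *
        leg12 k H Rinv := by
  induction x using TensorProduct.induction_on with
  | zero => simp
  | tmul h c =>
      rw [Algebra.TensorProduct.map_tmul, t12_assoc]
      rw [Algebra.TensorProduct.congr_apply]
      simp only [Algebra.TensorProduct.map_tmul, AlgEquiv.coe_refl, AlgHom.coe_id, id_eq,
        AlgEquiv.toAlgHom_eq_coe, AlgHom.coe_coe, AlgEquiv.coe_algHom]
      rw [hΔop h]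
      have key : (R * (Bialgebra.comulAlgHom k H) h * Rinv) ⊗ₜ[k] c =
          (R ⊗ₜ[k] (1:H)) * ((Bialgebra.comulAlgHom k H h) ⊗ₜ[k] c) *
            (Rinv ⊗ₜ[k] (1:H)) := by
        simp [Algebra.TensorProduct.tmul_mul_tmul]
      rw [key, map_mul, map_mul, ← leg12_eq, ← leg12_eq]
  | add x y hx hy =>
      simp only [map_add, hx, hy, mul_add, add_mul]

lemma qybe (R Rinv : H ⊗[k] H)
    (hinv₂ : Rinv * R = 1)
    (hΔop : ∀ h : H,
      (Algebra.TensorProduct.comm k H H) (Bialgebra.comulAlgHom k H h) =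
        R * Bialgebra.comulAlgHom k H h * Rinv)
    (hhex₁ : (Algebra.TensorProduct.assoc k k k H H H).toAlgHom
        ((Algebra.TensorProduct.map (Bialgebra.comulAlgHom k H) (AlgHom.id k H)) R) =
      leg13 k H R * leg23 k H R) :
    leg12 k H R * leg13 k H R * leg23 k H R = leg23 k H R * leg13 k H R * leg12 k H R := by
  have hhex : (Algebra.TensorProduct.assoc k k k H H H)
      ((Algebra.TensorProduct.map (Bialgebra.comulAlgHom k H) (AlgHom.id k H)) R) =
      leg13 k H R * leg23 k H R := hhex₁
  have h1 := conj_lemma k H R Rinv hΔop R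
  rw [hhex, map_mul, t12_leg13, t12_leg23] at h1
  have hone : leg12 k H Rinv * leg12 k H R = 1 := by
    rw [← map_mul, hinv₂, map_one]
  rw [h1]
  simp only [mul_assoc]
  rw [hone, mul_one]


lemma left_cancel_unit {M : Type*} [Monoid M] (u v x y : M)
    (h1 : u * v = 1) (h2 : v * u = 1) : (u * x = u * y ↔ x = y) := by
  constructor
  · intro h
    calc x = v * (u * x) := by rw [← mul_assoc, h2, one_mul]
    _ = v * (u * y) := by rw [h]
    _ = y := by rw [← mul_assoc, h2, one_mul]
  · intro h; rw [h]

lemma main_aux {M : Type*} [Monoid M] (r12 r21 r31 r23 r32 s21 s31 s32 : M)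
    (h21a : r21 * s21 = 1) (h21b : s21 * r21 = 1)
    (h31a : r31 * s31 = 1) (h31b : s31 * r31 = 1)
    (h32a : r32 * s32 = 1) (h32b : s32 * r32 = 1)
    (QC : r32 * r31 * r21 = r21 * r31 * r32)
    (QD : r23 * r21 * r31 = r31 * r21 * r23)
    (QE : r31 * r32 * r12 = r12 * r32 * r31) :
    (r12 * s31 * r23 = r23 * s31 * r12) ↔
      (r21 * r12 * (r32 * r23) = r32 * r23 * (r21 * r12)) := by
  have QE'' : ∀ X, r12 * (r32 * (r31 * X)) = r31 * (r32 * (r12 * X)) := by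
    intro X
    have h := congrArg (· * X) QE
    simp only [mul_assoc] at h
    exact h.symm
  have QC'' : ∀ X, r21 * (r31 * (r32 * X)) = r32 * (r31 * (r21 * X)) := by
    intro X
    have h := congrArg (· * X) QC
    simp only [mul_assoc] at h
    exact h.symm
  have QD'' : ∀ X, r23 * (r21 * (r31 * X)) = r31 * (r21 * (r23 * X)) := by
    intro X
    have h := congrArg (· * X) QD
    simp only [mul_assoc] at h
    exact h
  have key1 : r21 * (r12 * (r32 * r23)) = r32 * (r31 * (r21 * (r12 * (s31 * r23)))) := by
    calc r21 * (r12 * (r32 * r23))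
        = r21 * (r12 * (r32 * (r31 * (s31 * r23)))) := by
          rw [← mul_assoc r31 s31, h31a, one_mul]
      _ = r21 * (r31 * (r32 * (r12 * (s31 * r23)))) := by rw [QE'' (s31 * r23)]
      _ = r32 * (r31 * (r21 * (r12 * (s31 * r23)))) := QC'' (r12 * (s31 * r23))
  have key2 : r32 * (r23 * (r21 * r12)) = r32 * (r31 * (r21 * (r23 * (s31 * r12)))) := by
    calc r32 * (r23 * (r21 * r12))
        = r32 * (r23 * (r21 * (r31 * (s31 * r12)))) := by
          rw [← mul_assoc r31 s31, h31a, one_mul]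
      _ = r32 * (r31 * (r21 * (r23 * (s31 * r12)))) := by rw [QD'' (s31 * r12)]
  constructor
  · intro h
    simp only [mul_assoc] at h ⊢
    rw [key1, key2, left_cancel_unit r32 s32 _ _ h32a h32b,
      left_cancel_unit r31 s31 _ _ h31a h31b, left_cancel_unit r21 s21 _ _ h21a h21b]
    exact h
  · intro h
    simp only [mul_assoc] at h ⊢
    rw [key1, key2, left_cancel_unit r32 s32 _ _ h32a h32b,
      left_cancel_unit r31 s31 _ _ h31a h31b, left_cancel_unit r21 s21 _ _ h21a h21b] at h
    exact h


/-- A quasitriangular structure `R` on a Hopf algebra `H` is pseudotriangular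
(`R₁₂ R₃₁⁻¹ R₂₃ = R₂₃ R₃₁⁻¹ R₁₂`) if and only if `F = R₂₁ R` satisfies
`F₁₂ F₂₃ = F₂₃ F₁₂`. -/
theorem pseudotriangular_iff_double_R_commutes
    (R Rinv : H ⊗[k] H)
    (hinv₁ : R * Rinv = 1) (hinv₂ : Rinv * R = 1)
    (hΔop : ∀ h : H,
      (Algebra.TensorProduct.comm k H H) (Bialgebra.comulAlgHom k H h) =
        R * Bialgebra.comulAlgHom k H h * Rinv)
    (hhex₁ : (Algebra.TensorProduct.assoc k k k H H H).toAlgHom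
        ((Algebra.TensorProduct.map (Bialgebra.comulAlgHom k H) (AlgHom.id k H)) R) =
      leg13 k H R * leg23 k H R)
    (hhex₂ : (Algebra.TensorProduct.map (AlgHom.id k H) (Bialgebra.comulAlgHom k H)) R =
      leg13 k H R * leg12 k H R) :
    (leg12 k H R * leg31 k H Rinv * leg23 k H R =
      leg23 k H R * leg31 k H Rinv * leg12 k H R) ↔
    (leg12 k H ((Algebra.TensorProduct.comm k H H) R * R) *
        leg23 k H ((Algebra.TensorProduct.comm k H H) R * R) =
      leg23 k H ((Algebra.TensorProduct.comm k H H) R * R) *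
        leg12 k H ((Algebra.TensorProduct.comm k H H) R * R)) := by
  have Q := qybe k H R Rinv hinv₂ hΔop hhex₁
  -- variants of the quantum Yang-Baxter equation
  have QA := congrArg (t12 k H) Q
  simp only [map_mul, t12_leg12, t12_leg13, t12_leg23] at QA
  have QE := congrArg (t23 k H) QA
  simp only [map_mul, t23_leg12, t23_leg13, t23_leg23] at QE
  have QC := congrArg (t12 k H) QE
  simp only [map_mul, t12_leg12, t12_leg13, t12_leg23] at QC
  have QB := congrArg (t23 k H) Q
  simp only [map_mul, t23_leg12, t23_leg13, t23_leg23] at QB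
  have QD := congrArg (t12 k H) QB
  simp only [map_mul, t12_leg12, t12_leg13, t12_leg23] at QD
  -- unit equations
  have h21a : leg12 k H (Algebra.TensorProduct.comm k H H R) *
      leg12 k H (Algebra.TensorProduct.comm k H H Rinv) = 1 := by
    rw [← map_mul, ← map_mul, hinv₁, map_one, map_one]
  have h21b : leg12 k H (Algebra.TensorProduct.comm k H H Rinv) *
      leg12 k H (Algebra.TensorProduct.comm k H H R) = 1 := by
    rw [← map_mul, ← map_mul, hinv₂, map_one, map_one]
  have h31a : leg13 k H (Algebra.TensorProduct.comm k H H R) *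
      leg13 k H (Algebra.TensorProduct.comm k H H Rinv) = 1 := by
    rw [← map_mul, ← map_mul, hinv₁, map_one, map_one]
  have h31b : leg13 k H (Algebra.TensorProduct.comm k H H Rinv) *
      leg13 k H (Algebra.TensorProduct.comm k H H R) = 1 := by
    rw [← map_mul, ← map_mul, hinv₂, map_one, map_one]
  have h32a : leg23 k H (Algebra.TensorProduct.comm k H H R) *
      leg23 k H (Algebra.TensorProduct.comm k H H Rinv) = 1 := by
    rw [← map_mul, ← map_mul, hinv₁, map_one, map_one]
  have h32b : leg23 k H (Algebra.TensorProduct.comm k H H Rinv) *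
      leg23 k H (Algebra.TensorProduct.comm k H H R) = 1 := by
    rw [← map_mul, ← map_mul, hinv₂, map_one, map_one]
  have hleg31 : leg31 k H Rinv = leg13 k H (Algebra.TensorProduct.comm k H H Rinv) := rfl
  rw [hleg31, map_mul (leg12 k H), map_mul (leg23 k H)]
  exact main_aux (leg12 k H R) (leg12 k H (Algebra.TensorProduct.comm k H H R))
    (leg13 k H (Algebra.TensorProduct.comm k H H R)) (leg23 k H R)
    (leg23 k H (Algebra.TensorProduct.comm k H H R))
    (leg12 k H (Algebra.TensorProduct.comm k H H Rinv))
    (leg13 k H (Algebra.TensorProduct.comm k H H Rinv))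
    (leg23 k H (Algebra.TensorProduct.comm k H H Rinv))
    h21a h21b h31a h31b h32a h32b QC QD QE


end
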